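/- Let M be an r × s matrix with entries in {0,1}. Suppose every row and every column of M consists of at most k maximal alternating intervals of consecutive equal entries, and suppose the set C(M) = { a ∈ [r-1] : M(a,j) ≠ M(a+1,j) for some column j } has at most l elements. Then the number of column indices j ∈ [s-1] for which the j-th column of M differs from the (j+1)-th column is at most (k-1)(2l+1). -/
import Mathlib

open Finset in
lemma card_subtype_eq_filter (n : ℕ) (P : ℕ → Prop) [DecidablePred P]
    (hP : ∀ j, P j → j < n) :
    Nat.card {j // P j} = ((Finset.range n).filter P).card := by
  rw [← Fintype.card_coe, ← Nat.card_eq_fintype_card]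
  refine Nat.card_congr (Equiv.subtypeEquivRight ?_)
  intro j
  simp only [Finset.mem_filter, Finset.mem_range]
  exact ⟨fun h => ⟨hP j h, h⟩, fun h => h.2⟩

/-- If every row and column of an `r × s` 0-1 matrix `M` consists of at most
`k` maximal constant intervals (equivalently, has at most `k-1` "breaks" between
consecutive entries), and the set `C(M)` of row indices `a` where some column changes
between rows `a` and `a+1` has at most `l` elements, then the number of column indices
`j` where column `j` differs from column `j+1` is at most `(k-1)(2l+1)`. -/
theorem stmt_2 (r s k l : ℕ) (M : Fin r → Fin s → Fin 2)
    (hrow : ∀ i : Fin r,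
      Nat.card {j : ℕ // ∃ h : j + 1 < s, M i ⟨j, by omega⟩ ≠ M i ⟨j + 1, h⟩} ≤ k - 1)
    (hcol : ∀ j : Fin s,
      Nat.card {a : ℕ // ∃ h : a + 1 < r, M ⟨a, by omega⟩ j ≠ M ⟨a + 1, h⟩ j} ≤ k - 1)
    (hC : Nat.card {a : ℕ // ∃ (h : a + 1 < r) (j : Fin s),
        M ⟨a, by omega⟩ j ≠ M ⟨a + 1, h⟩ j} ≤ l) :
    Nat.card {j : ℕ // ∃ (h : j + 1 < s) (i : Fin r),
        M i ⟨j, by omega⟩ ≠ M i ⟨j + 1, h⟩} ≤ (k - 1) * (2 * l + 1) := by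
  classical
  rcases Nat.eq_zero_or_pos r with hr | hr
  · subst hr
    have he : IsEmpty {j : ℕ // ∃ (h : j + 1 < s) (i : Fin 0),
        M i ⟨j, by omega⟩ ≠ M i ⟨j + 1, h⟩} := by
      constructor; rintro ⟨j, h, i, _⟩; exact i.elim0
    simp [Nat.card_of_isEmpty]
  -- r > 0
  set Q : ℕ → Prop := fun a => ∃ (h : a + 1 < r) (j : Fin s),
      M ⟨a, by omega⟩ j ≠ M ⟨a + 1, h⟩ j with hQdef
  have hQlt : ∀ a, Q a → a < r := by
    rintro a ⟨h, -⟩; omega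
  set PB : ℕ → Prop := fun j => ∃ (h : j + 1 < s) (i : Fin r),
      M i ⟨j, by omega⟩ ≠ M i ⟨j + 1, h⟩ with hPBdef
  have hPBlt : ∀ j, PB j → j < s := by
    rintro j ⟨h, -⟩; omega
  set Crows : Finset ℕ := (Finset.range r).filter Q with hCrowsdef
  have hCrows : Crows.card ≤ l := by
    rw [← card_subtype_eq_filter r Q hQlt]; exact hC
  set R : Finset ℕ := insert 0 (Crows.image (· + 1)) with hRdef
  have hRlt : ∀ t ∈ R, t < r := by
    intro t ht
    rcases Finset.mem_insert.1 ht with h0 | him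
    · omega
    · obtain ⟨a, ha, rfl⟩ := Finset.mem_image.1 him
      obtain ⟨h, -⟩ := (Finset.mem_filter.1 ha).2
      exact h
  set R' : Finset (Fin r) := R.attachFin hRlt with hR'def
  set Break : Fin r → Finset ℕ := fun i => (Finset.range s).filter
      (fun j => ∃ h : j + 1 < s, M i ⟨j, by omega⟩ ≠ M i ⟨j + 1, h⟩) with hBdef
  have hBreak : ∀ i, (Break i).card ≤ k - 1 := by
    intro i
    rw [hBdef, ← card_subtype_eq_filter s _ (by rintro j ⟨h, -⟩; omega)]
    exact hrow i
  have key : ∀ n (hn : n < r), ∃ t, t ∈ R ∧ ∃ ht : t < r,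
      ∀ j, M ⟨n, hn⟩ j = M ⟨t, ht⟩ j := by
    intro n
    induction n with
    | zero => intro hn; exact ⟨0, Finset.mem_insert_self _ _, hn, fun j => rfl⟩
    | succ m ih =>
      intro hn
      by_cases hq : Q m
      · refine ⟨m + 1, ?_, hn, fun j => rfl⟩
        refine Finset.mem_insert.2 (Or.inr (Finset.mem_image.2 ⟨m, ?_, rfl⟩))
        exact Finset.mem_filter.2 ⟨Finset.mem_range.2 (by omega), hq⟩
      · have hm : m < r := by omega
        obtain ⟨t, htR, ht, heq⟩ := ih hm
        refine ⟨t, htR, ht, fun j => ?_⟩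
        have hstep : M ⟨m, hm⟩ j = M ⟨m + 1, hn⟩ j := by
          by_contra hne
          exact hq ⟨hn, j, hne⟩
        rw [← hstep, heq]
  set B : Finset ℕ := (Finset.range s).filter PB with hBsetdef
  have hgoal : Nat.card {j // PB j} = B.card := card_subtype_eq_filter s PB hPBlt
  have hsub : B ⊆ R'.biUnion Break := by
    intro j hj
    obtain ⟨h, i, hne⟩ := (Finset.mem_filter.1 hj).2
    obtain ⟨t, htR, ht, heq⟩ := key i.1 i.2
    refine Finset.mem_biUnion.2 ⟨⟨t, ht⟩, (Finset.mem_attachFin hRlt).2 htR, ?_⟩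
    refine Finset.mem_filter.2 ⟨Finset.mem_range.2 (by omega), h, ?_⟩
    have h1 := heq ⟨j, by omega⟩
    have h2 := heq ⟨j + 1, h⟩
    rw [← h1, ← h2]
    exact hne
  have hRcard : R'.card ≤ l + 1 := by
    rw [hR'def, Finset.card_attachFin]
    calc R.card ≤ (Crows.image (· + 1)).card + 1 := Finset.card_insert_le _ _
      _ ≤ Crows.card + 1 := by
          exact Nat.add_le_add_right (Finset.card_image_le) 1
      _ ≤ l + 1 := by omega
  calc Nat.card {j // PB j} = B.card := hgoal
    _ ≤ (R'.biUnion Break).card := Finset.card_le_card hsub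
    _ ≤ ∑ t ∈ R', (Break t).card := Finset.card_biUnion_le
    _ ≤ R'.card * (k - 1) := by
        rw [← smul_eq_mul]
        exact Finset.sum_le_card_nsmul _ _ _ (fun t _ => hBreak t)
    _ ≤ (l + 1) * (k - 1) := Nat.mul_le_mul_right _ hRcard
    _ = (k - 1) * (l + 1) := Nat.mul_comm _ _
    _ ≤ (k - 1) * (2 * l + 1) := Nat.mul_le_mul_left _ (by omega)
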